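/- The algebras B⁴₂₂ (nonzero products e₁e₁ = e₂, e₁e₂ = e₃, e₁e₃ = e₄, e₂e₁ = e₄) and B⁴₂₃ (nonzero products e₁e₁ = e₂, e₁e₂ = e₃, e₁e₃ = e₄, e₂e₁ = e₃ + e₄, e₂e₂ = e₄, e₃e₁ = e₄) are both nilpotent bicommutative ℂ-algebras, and they are not isomorphic. -/
import Mathlib


noncomputable def mB422 : (Fin 4 → ℂ) →ₗ[ℂ] (Fin 4 → ℂ) →ₗ[ℂ] (Fin 4 → ℂ) :=
  LinearMap.mk₂ ℂ (fun u v => ![0, u 0 * v 0, u 0 * v 1, u 0 * v 2 + u 1 * v 0])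
    (fun x y v => by funext i; fin_cases i <;> simp <;> ring)
    (fun a x v => by funext i; fin_cases i <;> simp <;> ring)
    (fun u x y => by funext i; fin_cases i <;> simp <;> ring)
    (fun u a x => by funext i; fin_cases i <;> simp <;> ring)

noncomputable def mB423 : (Fin 4 → ℂ) →ₗ[ℂ] (Fin 4 → ℂ) →ₗ[ℂ] (Fin 4 → ℂ) :=
  LinearMap.mk₂ ℂ (fun u v =>
      ![0, u 0 * v 0, u 0 * v 1 + u 1 * v 0, u 0 * v 2 + u 1 * v 0 + u 1 * v 1 + u 2 * v 0])
    (fun x y v => by funext i; fin_cases i <;> simp <;> ring)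
    (fun a x v => by funext i; fin_cases i <;> simp <;> ring)
    (fun u x y => by funext i; fin_cases i <;> simp <;> ring)
    (fun u a x => by funext i; fin_cases i <;> simp <;> ring)

noncomputable def mulSub {V : Type*} [AddCommGroup V] [Module ℂ V]
    (μ : V →ₗ[ℂ] V →ₗ[ℂ] V) (S T : Submodule ℂ V) : Submodule ℂ V :=
  Submodule.span ℂ {w | ∃ u ∈ S, ∃ v ∈ T, w = μ u v}

/-- The powers of an algebra: `A¹ = A`, `Aⁿ = Σ_{i+j=n} Aⁱ·Aʲ`. -/
noncomputable def pw {V : Type*} [AddCommGroup V] [Module ℂ V]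
    (μ : V →ₗ[ℂ] V →ₗ[ℂ] V) : ℕ → Submodule ℂ V
  | 0 => ⊤
  | 1 => ⊤
  | (n+2) => ⨆ i : Fin (n+1), mulSub μ (pw μ (i+1)) (pw μ (n+1-i))
  decreasing_by all_goals (have := i.isLt; omega)

lemma mB422_apply (u v : Fin 4 → ℂ) :
    mB422 u v = ![0, u 0 * v 0, u 0 * v 1, u 0 * v 2 + u 1 * v 0] := by
  simp only [mB422, LinearMap.mk₂_apply]

lemma mB423_apply (u v : Fin 4 → ℂ) :
    mB423 u v = ![0, u 0 * v 0, u 0 * v 1 + u 1 * v 0,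
      u 0 * v 2 + u 1 * v 0 + u 1 * v 1 + u 2 * v 0] := by
  simp only [mB423, LinearMap.mk₂_apply]

noncomputable def annS (k : ℕ) : Submodule ℂ (Fin 4 → ℂ) where
  carrier := {u | ∀ i : Fin 4, (i : ℕ) < k → u i = 0}
  add_mem' := by intro a b ha hb i hi; simp [Pi.add_apply, ha i hi, hb i hi]
  zero_mem' := by intro i hi; rfl
  smul_mem' := by intro c a ha i hi; simp [Pi.smul_apply, ha i hi]

lemma annS_four_eq_bot : annS 4 = ⊥ := by
  apply le_bot_iff.mp
  intro u hu
  have : u = 0 := funext fun i => hu i i.isLt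
  simp [this]

lemma mul_mem_annS_422 {a b : ℕ} {u v : Fin 4 → ℂ} (hu : u ∈ annS a) (hv : v ∈ annS b) :
    mB422 u v ∈ annS (a + b + 1) := by
  have h : ∀ i j : Fin 4, (i : ℕ) + (j : ℕ) < a + b → u i * v j = 0 := by
    intro i j hij
    rcases Nat.lt_or_ge (i : ℕ) a with h | h
    · simp [hu i h]
    · simp [hv j (by omega)]
  intro i hi
  fin_cases i <;> simp [mB422_apply] at hi ⊢
  · rcases hi with h1 | h1
    · exact Or.inl (hu 0 (by simpa using h1))
    · exact Or.inr (hv 0 (by simpa using h1))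
  · have := h 0 1 (by simp; omega)
    simp at this
    tauto
  · linear_combination h 0 2 (by simp; omega) + h 1 0 (by simp; omega)

lemma mul_mem_annS_423 {a b : ℕ} {u v : Fin 4 → ℂ} (hu : u ∈ annS a) (hv : v ∈ annS b) :
    mB423 u v ∈ annS (a + b + 1) := by
  have h : ∀ i j : Fin 4, (i : ℕ) + (j : ℕ) < a + b → u i * v j = 0 := by
    intro i j hij
    rcases Nat.lt_or_ge (i : ℕ) a with h | h
    · simp [hu i h]
    · simp [hv j (by omega)]
  intro i hi
  fin_cases i <;> simp [mB423_apply] at hi ⊢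
  · rcases hi with h1 | h1
    · exact Or.inl (hu 0 (by simpa using h1))
    · exact Or.inr (hv 0 (by simpa using h1))
  · linear_combination h 0 1 (by simp; omega) + h 1 0 (by simp; omega)
  · linear_combination h 0 2 (by simp; omega) + h 1 0 (by simp; omega)
      + h 1 1 (by simp; omega) + h 2 0 (by simp; omega)

lemma pw_le_annS (μ : (Fin 4 → ℂ) →ₗ[ℂ] (Fin 4 → ℂ) →ₗ[ℂ] (Fin 4 → ℂ))
    (H : ∀ {a b : ℕ} {u v : Fin 4 → ℂ}, u ∈ annS a → v ∈ annS b → μ u v ∈ annS (a + b + 1)) :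
    ∀ n, pw μ (n + 1) ≤ annS n := by
  intro n
  induction n using Nat.strong_induction_on with
  | _ n ih =>
    match n with
    | 0 =>
      rw [pw]
      intro u _ i hi
      omega
    | (m + 1) =>
      rw [pw]
      apply iSup_le
      intro i
      apply Submodule.span_le.mpr
      rintro w ⟨u, hu, v, hv, rfl⟩
      have hi : (i : ℕ) ≤ m := by omega
      have h1 : u ∈ annS (i : ℕ) := ih i (by omega) hu
      have hrw : m + 1 - (i : ℕ) = (m - (i : ℕ)) + 1 := by omega
      rw [hrw] at hv
      have h2 : v ∈ annS (m - (i : ℕ)) := ih (m - (i : ℕ)) (by omega) hv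
      have h3 := H h1 h2
      have he : (i : ℕ) + (m - (i : ℕ)) + 1 = m + 1 := by omega
      rwa [he] at h3

lemma pw5_422 : pw mB422 5 = ⊥ := by
  apply le_bot_iff.mp
  rw [← annS_four_eq_bot]
  exact pw_le_annS mB422 (fun hu hv => mul_mem_annS_422 hu hv) 4

lemma pw5_423 : pw mB423 5 = ⊥ := by
  apply le_bot_iff.mp
  rw [← annS_four_eq_bot]
  exact pw_le_annS mB423 (fun hu hv => mul_mem_annS_423 hu hv) 4

/-- `B⁴₂₂` and `B⁴₂₃` are nilpotent bicommutative algebras, and they are not isomorphic. -/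
theorem B422_B423_nonisomorphic :
    ((∀ x y z : Fin 4 → ℂ, mB422 (mB422 x y) z = mB422 (mB422 x z) y) ∧
     (∀ x y z : Fin 4 → ℂ, mB422 x (mB422 y z) = mB422 y (mB422 x z)) ∧
     pw mB422 5 = ⊥) ∧
    ((∀ x y z : Fin 4 → ℂ, mB423 (mB423 x y) z = mB423 (mB423 x z) y) ∧
     (∀ x y z : Fin 4 → ℂ, mB423 x (mB423 y z) = mB423 y (mB423 x z)) ∧
     pw mB423 5 = ⊥) ∧
    ¬∃ φ : (Fin 4 → ℂ) ≃ₗ[ℂ] (Fin 4 → ℂ),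
      ∀ u v : Fin 4 → ℂ, φ (mB422 u v) = mB423 (φ u) (φ v) := by
  refine ⟨⟨?_, ?_, pw5_422⟩, ⟨?_, ?_, pw5_423⟩, ?_⟩
  · intro x y z; funext i; fin_cases i <;> simp [mB422_apply] <;> ring
  · intro x y z; funext i; fin_cases i <;> simp [mB422_apply] <;> ring
  · intro x y z; funext i; fin_cases i <;> simp [mB423_apply] <;> ring
  · intro x y z; funext i; fin_cases i <;> simp [mB423_apply] <;> ring
  · rintro ⟨φ, hφ⟩
    have h422 : ∀ w, mB422 ![0, 0, 1, 0] w = 0 := by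
      intro w; funext i; fin_cases i <;> simp [mB422_apply]
    set x : Fin 4 → ℂ := φ ![0, 0, 1, 0] with hx
    have hxl : ∀ y, mB423 x y = 0 := by
      intro y
      have h := hφ ![0, 0, 1, 0] (φ.symm y)
      rw [h422, map_zero, φ.apply_symm_apply] at h
      exact h.symm
    have key := hxl ![1, 0, 0, 0]
    have h0 : x 0 = 0 := by simpa [mB423_apply] using congrFun key 1
    have h1 : x 1 = 0 := by simpa [mB423_apply] using congrFun key 2
    have h2 : x 2 = 0 := by
      have := congrFun key 3
      simp [mB423_apply, h1] at this
      exact this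
    have hzero : mB423 (φ ![1, 0, 0, 0]) x = 0 := by
      funext i; fin_cases i <;> simp [mB423_apply, h0, h1, h2]
    have hmain := hφ ![1, 0, 0, 0] ![0, 0, 1, 0]
    have hprod : mB422 ![1, 0, 0, 0] ![0, 0, 1, 0] = ![0, 0, 0, 1] := by
      funext i; fin_cases i <;> simp [mB422_apply]
    rw [hprod, ← hx, hzero] at hmain
    have : (![0, 0, 0, 1] : Fin 4 → ℂ) = 0 := by
      have := φ.map_eq_zero_iff.mp hmain
      exact this
    simpa using congrFun this 3
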